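/- arXiv:2205.08537 — 4 statements merged into one kernel-verified Lean document; each statement's English description precedes it below -/
import Mathlib

section
/- Let P be a monic polynomial with integer coefficients such that every root of P in ℂ (viewing P over ℂ via the canonical ring homomorphism ℤ → ℂ) is a root of unity. Then the multiset of complex roots of P (counted with multiplicity) is invariant under the map z ↦ z⁻¹; that is, the image of the root multiset under inversion equals the root multiset itself. -/
/-- If `P` is a monic integer polynomial all of whose complex roots are roots of unity,
then the multiset of complex roots of `P` (with multiplicity) is invariant under
inversion `z ↦ z⁻¹`. -/
theorem roots_map_inv_eq_roots (P : Polynomial ℤ) (hP : P.Monic)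
    (hru : ∀ z : ℂ, (P.map (Int.castRingHom ℂ)).IsRoot z → ∃ k : ℕ, 0 < k ∧ z ^ k = 1) :
    Multiset.map (fun z : ℂ => z⁻¹) (P.map (Int.castRingHom ℂ)).roots
      = (P.map (Int.castRingHom ℂ)).roots := by
  set Q := P.map (Int.castRingHom ℂ) with hQdef
  have hconj : Q.map (starRingEnd ℂ) = Q := by
    rw [hQdef, Polynomial.map_map]
    congr 1
    ext n
    simp
  have h1 : Q.roots.map (starRingEnd ℂ) = Q.roots := by
    conv_rhs => rw [← hconj,
      (IsAlgClosed.splits Q).roots_map _]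
  calc Multiset.map (fun z : ℂ => z⁻¹) Q.roots
      = Multiset.map (starRingEnd ℂ) Q.roots := by
        refine Multiset.map_congr rfl ?_
        intro z hz
        obtain ⟨k, hk, hzk⟩ := hru z (Polynomial.isRoot_of_mem_roots hz)
        have habs : ‖z‖ = 1 := by
          have h := congrArg (‖·‖) hzk
          rw [norm_pow, norm_one] at h
          have h0 := norm_nonneg z
          exact (pow_left_inj₀ h0 zero_le_one hk.ne').mp (by rw [h, one_pow])
        exact Complex.inv_eq_conj habs
    _ = Q.roots := h1
end

section
/- Let p be a prime, m a natural number, n ≥ 1, and let A be an n×n integer matrix that is invertible over ℤ (det A = ±1) and quasi-unipotent. Set Q := (A⁻¹)^(p^m). Then the characteristic polynomial of Q is congruent modulo p to the characteristic polynomial of A; that is, their images under the coefficientwise reduction map ℤ[X] → (ℤ/pℤ)[X] are equal. In particular, trace(Q) ≡ trace(A) (mod p). -/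
/-- A square integer matrix is *quasi-unipotent* if every complex root of its
characteristic polynomial is a root of unity. -/
def Matrix.QuasiUnipotent {n : ℕ} (A : Matrix (Fin n) (Fin n) ℤ) : Prop :=
  ∀ z : ℂ, (A.charpoly.map (Int.castRingHom ℂ)).IsRoot z → ∃ k : ℕ, 0 < k ∧ z ^ k = 1

open Polynomial Matrix

/-- evaluating the charpoly is a determinant. -/
lemma my_eval_charpoly {n : ℕ} {K : Type*} [CommRing K] (M : Matrix (Fin n) (Fin n) K) (x : K) :
    M.charpoly.eval x = (x • (1 : Matrix (Fin n) (Fin n) K) - M).det := by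
  rw [Matrix.charpoly, ← Polynomial.coe_evalRingHom, RingHom.map_det]
  congr 1
  ext i j
  rcases eq_or_ne i j with h | h <;>
    simp [Matrix.charmatrix_apply, Matrix.diagonal_apply, h, Matrix.one_apply, Matrix.smul_apply]

/-- charpoly of a power of `p^m` over `ZMod p` is unchanged. -/
lemma my_charpoly_pow_prime_pow {p : ℕ} [Fact p.Prime] {n : ℕ} (m : ℕ)
    (B : Matrix (Fin n) (Fin n) (ZMod p)) : (B ^ p ^ m).charpoly = B.charpoly := by
  induction m with
  | zero => simp
  | succ m ih => rw [pow_succ, pow_mul, ZMod.charpoly_pow_card, ih]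

/-- a complex root of unity has `z⁻¹ = conj z`. -/
lemma my_inv_eq_conj {z : ℂ} {k : ℕ} (hk : 0 < k) (h1 : z ^ k = 1) :
    z⁻¹ = (starRingEnd ℂ) z := by
  have hns : Complex.normSq z = 1 := by
    have hpow : Complex.normSq z ^ k = 1 := by
      rw [← map_pow, h1, _root_.map_one]
    rcases lt_trichotomy (Complex.normSq z) 1 with h | h | h
    · have := pow_lt_one₀ (Complex.normSq_nonneg z) h hk.ne'
      rw [hpow] at this; exact absurd this (lt_irrefl 1)
    · exact h
    · have := one_lt_pow₀ h hk.ne'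
      rw [hpow] at this; exact absurd this (lt_irrefl 1)
  apply inv_eq_of_mul_eq_one_right
  rw [Complex.mul_conj, hns, Complex.ofReal_one]

/-- Key integral lemma: the inverse of a quasi-unipotent `GL_n(ℤ)` matrix has the
same characteristic polynomial. -/
lemma my_charpoly_inv {n : ℕ} (A : Matrix (Fin n) (Fin n) ℤ) (hu : IsUnit A.det)
    (hqu : A.QuasiUnipotent) : (A⁻¹).charpoly = A.charpoly := by
  set φ := Int.castRingHom ℂ with hφ
  set M := A.map φ with hM
  -- inverse maps to inverse
  have hAinv : A⁻¹ * A = 1 := Matrix.nonsing_inv_mul A hu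
  have hMinv : (A⁻¹).map φ * M = 1 := by
    rw [hM, ← Matrix.map_mul, hAinv, Matrix.map_one φ (map_zero φ) (_root_.map_one φ)]
  have hMdet : IsUnit M.det := by
    rw [hM, ← RingHom.mapMatrix_apply, ← RingHom.map_det]
    exact hu.map _
  have hMi : (A⁻¹).map φ = M⁻¹ := (Matrix.inv_eq_left_inv hMinv).symm
  have hdetMM : M⁻¹.det * M.det = 1 := by
    rw [← Matrix.det_mul, Matrix.nonsing_inv_mul M hMdet, Matrix.det_one]
  set F := M.charpoly with hF
  have hFmap : F = A.charpoly.map φ := Matrix.charpoly_map A φ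
  have hsplits : F.Splits := IsAlgClosed.splits F
  set R := F.roots with hR
  have hFprod : F = (R.map fun a => X - C a).prod :=
    hsplits.eq_prod_roots_of_monic (Matrix.charpoly_monic M)
  have hcard : Multiset.card R = n := by
    rw [hR, (Polynomial.splits_iff_card_roots).mp hsplits,
      Matrix.charpoly_natDegree_eq_dim, Fintype.card_fin]
  -- roots are roots of unity
  have hroot : ∀ z ∈ R, ∃ k : ℕ, 0 < k ∧ z ^ k = 1 := by
    intro z hz
    apply hqu
    rw [← hFmap]
    exact Polynomial.isRoot_of_mem_roots hz
  have hne : ∀ z ∈ R, z ≠ 0 := by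
    intro z hz h0
    obtain ⟨k, hk, h1⟩ := hroot z hz
    rw [h0, zero_pow hk.ne'] at h1
    exact zero_ne_one h1
  have hconj : ∀ z ∈ R, z⁻¹ = (starRingEnd ℂ) z := by
    intro z hz
    obtain ⟨k, hk, h1⟩ := hroot z hz
    exact my_inv_eq_conj hk h1
  -- the multiset of roots is closed under inversion
  have hFconj : F.map (starRingEnd ℂ) = F := by
    rw [hFmap, Polynomial.map_map]
    congr 1
    exact RingHom.ext_int _ _
  have hRconj : R.map (starRingEnd ℂ) = R := by
    conv_rhs => rw [hR, ← hFconj]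
    exact (hsplits.roots_map (starRingEnd ℂ)).symm
  have hRinv : R.map (fun z => z⁻¹) = R :=
    (Multiset.map_congr rfl hconj).trans hRconj
  -- evaluation identity
  have heval : ∀ x : ℂ, x ≠ 0 → (M⁻¹).charpoly.eval x = F.eval x := by
    intro x hx
    have hevF : ∀ y : ℂ, F.eval y = (R.map fun a => y - a).prod := by
      intro y
      conv_lhs => rw [hFprod]
      rw [Polynomial.eval_multiset_prod, Multiset.map_map]
      simp
    have e1 : x • (1 : Matrix (Fin n) (Fin n) ℂ) - M⁻¹ = M⁻¹ * (x • M - 1) := by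
      rw [Matrix.mul_sub, Matrix.mul_smul, Matrix.nonsing_inv_mul M hMdet, Matrix.mul_one]
    have e2 : x • M - 1 = x • (M - x⁻¹ • (1 : Matrix (Fin n) (Fin n) ℂ)) := by
      rw [smul_sub, smul_smul, mul_inv_cancel₀ hx, one_smul]
    have e3 : M - x⁻¹ • (1 : Matrix (Fin n) (Fin n) ℂ)
        = -(x⁻¹ • (1 : Matrix (Fin n) (Fin n) ℂ) - M) := (neg_sub _ _).symm
    rw [my_eval_charpoly, e1, Matrix.det_mul, e2, Matrix.det_smul, e3, Matrix.det_neg,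
      ← my_eval_charpoly, ← hF, hevF, Fintype.card_fin]
    -- now pure multiset algebra
    have hxn : (x : ℂ) ^ n = (R.map fun _ => x).prod := by
      rw [Multiset.map_const', Multiset.prod_replicate, hcard]
    have hmn : ((-1 : ℂ)) ^ n = (R.map fun _ => (-1 : ℂ)).prod := by
      rw [Multiset.map_const', Multiset.prod_replicate, hcard]
    rw [hxn, hmn, ← Multiset.prod_map_mul, ← Multiset.prod_map_mul]
    have hmc : (R.map fun a => x * ((-1 : ℂ) * (x⁻¹ - a))).prod
        = (R.map fun a => a * (x - a⁻¹)).prod := by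
      apply congr_arg
      apply Multiset.map_congr rfl
      intro a ha
      have ha0 : a ≠ 0 := hne a ha
      first
      | (field_simp; ring)
      | field_simp
    have hprodR : R.prod = M.det := by
      rw [hR, hF]; exact (Matrix.det_eq_prod_roots_charpoly M).symm
    rw [hmc, Multiset.prod_map_mul, Multiset.map_id', hprodR, ← mul_assoc, hdetMM, one_mul,
      hevF]
    have h2 : (R.map fun a => x - a⁻¹).prod = ((R.map fun z => z⁻¹).map fun a => x - a).prod := by
      rw [Multiset.map_map]; rfl
    rw [h2, hRinv]
  -- conclude polynomial equality over ℂ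
  have hMF : (M⁻¹).charpoly = F := by
    apply Polynomial.eq_of_infinite_eval_eq
    apply Set.Infinite.mono (s := {x : ℂ | x ≠ 0})
    · intro x hx; exact heval x hx
    · exact (Set.finite_singleton (0 : ℂ)).infinite_compl
  -- descend to ℤ
  have hmapeq : (A⁻¹).charpoly.map φ = A.charpoly.map φ := by
    rw [← Matrix.charpoly_map, hMi, hMF, hFmap]
  exact Polynomial.map_injective φ Int.cast_injective hmapeq

/-- Let `p` be a prime, `m` a natural number, and `A` an `n × n` integer matrix (`n ≥ 1`)
invertible over `ℤ` (`det A = ±1`) and quasi-unipotent.  Set `Q := (A⁻¹) ^ (p ^ m)`.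
Then the characteristic polynomial of `Q` is congruent mod `p` to that of `A`
(their coefficientwise reductions in `(ℤ/pℤ)[X]` agree); in particular
`trace Q ≡ trace A (mod p)`. -/
theorem charpoly_inv_pow_prime_pow_congr {p : ℕ} (hp : p.Prime) (m : ℕ) {n : ℕ}
    (hn : 1 ≤ n) (A : Matrix (Fin n) (Fin n) ℤ) (hdet : A.det = 1 ∨ A.det = -1)
    (hqu : A.QuasiUnipotent) (Q : Matrix (Fin n) (Fin n) ℤ) (hQ : Q = (A⁻¹) ^ p ^ m) :
    Q.charpoly.map (Int.castRingHom (ZMod p)) = A.charpoly.map (Int.castRingHom (ZMod p)) ∧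
      (Q.trace : ZMod p) = (A.trace : ZMod p) := by
  haveI : Fact p.Prime := ⟨hp⟩
  haveI : Nonempty (Fin n) := Fin.pos_iff_nonempty.mp hn
  have hu : IsUnit A.det := Int.isUnit_iff.mpr hdet
  set ψ := Int.castRingHom (ZMod p) with hψ
  have hinv : (A⁻¹).charpoly = A.charpoly := my_charpoly_inv A hu hqu
  have h1 : Q.charpoly.map ψ = A.charpoly.map ψ := by
    rw [← Matrix.charpoly_map, hQ, ← RingHom.mapMatrix_apply, map_pow,
      RingHom.mapMatrix_apply, my_charpoly_pow_prime_pow, Matrix.charpoly_map, hinv]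
  refine ⟨h1, ?_⟩
  have ht : ∀ B : Matrix (Fin n) (Fin n) ℤ,
      ((B.trace : ℤ) : ZMod p) = -((B.charpoly.map ψ).coeff (n - 1)) := by
    intro B
    rw [Matrix.trace_eq_neg_charpoly_coeff, Polynomial.coeff_map, Fintype.card_fin]
    push_cast
    rfl
  rw [ht Q, ht A, h1]
end

section
/- Let n ≥ 1 and let Q be an n×n integer matrix that is quasi-unipotent. Let e denote the algebraic multiplicity of 1 as an eigenvalue of Q, i.e., the multiplicity of 1 as a root of the characteristic polynomial of Q viewed over ℂ. Then 2·e ≤ n + trace(Q). -/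
open Polynomial

/-- If `Q` is an `n × n` quasi-unipotent integer matrix (`n ≥ 1`) and `e` is the algebraic
multiplicity of `1` as an eigenvalue of `Q` (the multiplicity of `1` as a root of the
characteristic polynomial of `Q` over `ℂ`), then `2 e ≤ n + trace Q`. -/
theorem two_mul_multiplicity_one_le {n : ℕ} (hn : 1 ≤ n)
    (Q : Matrix (Fin n) (Fin n) ℤ) (hqu : Q.QuasiUnipotent)
    (e : ℕ) (he : e = (Q.charpoly.map (Int.castRingHom ℂ)).rootMultiplicity 1) :
    2 * (e : ℤ) ≤ (n : ℤ) + Q.trace := by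
  set A : Matrix (Fin n) (Fin n) ℂ := Q.map (Int.castRingHom ℂ) with hA
  have hcp : A.charpoly = Q.charpoly.map (Int.castRingHom ℂ) :=
    (Matrix.charpoly_map Q (Int.castRingHom ℂ))
  set p : ℂ[X] := Q.charpoly.map (Int.castRingHom ℂ) with hp
  set m : Multiset ℂ := p.roots with hm
  -- every root has |z| = 1, hence re ≥ -1
  have habs : ∀ z ∈ m, -1 ≤ z.re := by
    intro z hz
    obtain ⟨k, hk, hzk⟩ := hqu z (isRoot_of_mem_roots hz)
    have h1 : ‖z‖ = 1 := Complex.norm_eq_one_of_pow_eq_one hzk hk.ne'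
    have := Complex.abs_re_le_norm z
    rw [h1] at this
    linarith [abs_le.mp this]
  -- trace over ℂ = sum of roots
  have htr : (Q.trace : ℂ) = m.sum := by
    have := Matrix.trace_eq_sum_roots_charpoly A
    rw [hcp] at this
    rw [← this, hA]
    simp [Matrix.trace, Matrix.map_apply]
  -- card of roots = n
  have hmonic : p.Monic := (Matrix.charpoly_monic Q).map _
  have hcard : Multiset.card m = n := by
    rw [hm, (splits_iff_card_roots).mp (IsAlgClosed.splits p)]
    rw [hp, (Matrix.charpoly_monic Q).natDegree_map, Matrix.charpoly_natDegree_eq_dim]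
    simp
  -- count of 1 in roots = e
  have hcount : m.count 1 = e := by rw [hm, count_roots]; exact he.symm
  -- split m = replicate e 1 + t
  obtain ⟨t, ht⟩ := Multiset.le_iff_exists_add.mp
    ((Multiset.le_count_iff_replicate_le).mp (le_of_eq hcount.symm))
  have htsub : ∀ z ∈ t, -1 ≤ z.re := fun z hz => habs z (by rw [ht]; exact Multiset.mem_add.mpr (Or.inr hz))
  -- sum of real parts
  have hre : (Q.trace : ℝ) = (m.map Complex.re).sum := by
    have h := map_multiset_sum Complex.reAddGroupHom m
    rw [Complex.coe_reAddGroupHom] at h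
    rw [← h]
    simpa using congrArg Complex.re htr
  have hsum : (e : ℝ) - ((Multiset.card t : ℝ)) ≤ (m.map Complex.re).sum := by
    rw [ht, Multiset.map_add, Multiset.sum_add, Multiset.map_replicate]
    simp only [Complex.one_re, Multiset.sum_replicate, nsmul_eq_mul, mul_one]
    have : -(Multiset.card t : ℝ) ≤ (t.map Complex.re).sum := by
      have h2 : ∀ x ∈ t.map Complex.re, (-1 : ℝ) ≤ x := by
        intro x hx
        obtain ⟨z, hz, rfl⟩ := Multiset.mem_map.mp hx
        exact htsub z hz
      have := Multiset.card_nsmul_le_sum h2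
      simpa [nsmul_eq_mul] using this
    linarith
  have hct : (Multiset.card t : ℝ) = n - e := by
    have := congrArg (Multiset.card) ht
    rw [Multiset.card_add, Multiset.card_replicate, hcard] at this
    have : n = e + Multiset.card t := this
    push_cast [this]; ring
  rw [hct] at hsum
  have : 2 * (e : ℝ) ≤ (n : ℝ) + (Q.trace : ℝ) := by rw [hre]; linarith
  exact_mod_cast this
end

section
/- Let Q be a 3×3 integer matrix that is quasi-unipotent and has trace(Q) = −1. Then the algebraic multiplicity of 1 as an eigenvalue of Q (the multiplicity of 1 as a root of the characteristic polynomial of Q viewed over ℂ) is at most 1. -/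
/-- If `Q` is a `3 × 3` quasi-unipotent integer matrix with trace `-1`, then the algebraic
multiplicity of `1` as an eigenvalue of `Q` (the multiplicity of `1` as a root of the
characteristic polynomial of `Q` over `ℂ`) is at most `1`. -/
theorem multiplicity_one_le_one_of_trace_neg_one (Q : Matrix (Fin 3) (Fin 3) ℤ)
    (hqu : Q.QuasiUnipotent) (htr : Q.trace = -1) :
    (Q.charpoly.map (Int.castRingHom ℂ)).rootMultiplicity 1 ≤ 1 := by
  set Qc : Matrix (Fin 3) (Fin 3) ℂ := Q.map (Int.castRingHom ℂ) with hQc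
  have hcp : Qc.charpoly = Q.charpoly.map (Int.castRingHom ℂ) :=
    (Matrix.charpoly_map Q (Int.castRingHom ℂ))
  set p : Polynomial ℂ := Q.charpoly.map (Int.castRingHom ℂ) with hp
  -- sum of roots = trace = -1
  have htrc : Qc.trace = -1 := by
    simp [hQc, Matrix.trace, Matrix.map_apply, ← Complex.ofReal_intCast]
    have : ((Q.trace : ℤ) : ℂ) = -1 := by rw [htr]; push_cast; ring
    rw [← this]
    simp [Matrix.trace]
  have hsum : p.roots.sum = -1 := by
    rw [← hcp, ← Matrix.trace_eq_sum_roots_charpoly, htrc]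
  -- roots have card 3
  have hmonic : p.Monic := (Q.charpoly_monic).map _
  have hdeg : p.natDegree = 3 := by
    rw [hp, (Q.charpoly_monic).natDegree_map, Q.charpoly_natDegree_eq_dim,
      Fintype.card_fin]
  have hcard : Multiset.card p.roots = 3 := by
    have := (Polynomial.splits_iff_card_roots (f := p)).mp (IsAlgClosed.splits p)
    rw [this, hdeg]
  -- every root has absolute value 1
  have habs : ∀ z ∈ p.roots, ‖z‖ = 1 := by
    intro z hz
    obtain ⟨k, hk, hzk⟩ := hqu z (Polynomial.isRoot_of_mem_roots hz)
    have : ‖z‖ ^ k = 1 := by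
      rw [← norm_pow, hzk, norm_one]
    exact (pow_left_inj₀ (norm_nonneg z) zero_le_one hk.ne').mp (by simpa using this)
  by_contra h
  push_neg at h
  have h2 : 2 ≤ p.roots.count 1 := by
    rw [Polynomial.count_roots]; omega
  have hrep : Multiset.replicate 2 (1 : ℂ) ≤ p.roots :=
    Multiset.le_count_iff_replicate_le.mp h2
  obtain ⟨t, ht⟩ := Multiset.le_iff_exists_add.mp hrep
  have htcard : Multiset.card t = 1 := by
    have := hcard
    rw [ht, Multiset.card_add, Multiset.card_replicate] at this
    omega
  obtain ⟨lam, hlam⟩ := Multiset.card_eq_one.mp htcard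
  have hlamval : lam = -3 := by
    rw [ht, hlam] at hsum
    simp [Multiset.sum_replicate] at hsum
    linear_combination hsum
  have hmem : lam ∈ p.roots := by
    rw [ht, hlam]; simp
  have := habs lam hmem
  rw [hlamval] at this
  norm_num at this
end
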